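/- For type A_{N−1}, for all j, k ∈ {1,…,N} and every y ∈ ℝ, ∫₀^L conj(M_j(x+iy)) M_k(x+iy) dx = δ_{jk} · L e^{−4πJ(j)y/L} θ₂(2(J(j)τ + i𝒩y/L); 2𝒩τ). -/

import Mathlib

open Complex MeasureTheory
open scoped Real ComplexConjugate

noncomputable section

/-- The Jacobi theta function θ₀. -/
def jtheta0 (v τ : ℂ) : ℂ :=
  ∑' n : ℤ, (-1 : ℂ) ^ n * Complex.exp (π * I * τ * (n : ℂ) ^ 2) *
    Complex.exp (2 * π * I * (n : ℂ) * v)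

/-- The Jacobi theta function θ₁. -/
def jtheta1 (v τ : ℂ) : ℂ :=
  I * ∑' n : ℤ, (-1 : ℂ) ^ n * Complex.exp (π * I * τ * ((n : ℂ) - 1 / 2) ^ 2) *
    Complex.exp ((2 * (n : ℂ) - 1) * π * I * v)

/-- The Jacobi theta function θ₂. -/
def jtheta2 (v τ : ℂ) : ℂ :=
  ∑' n : ℤ, Complex.exp (π * I * τ * ((n : ℂ) - 1 / 2) ^ 2) *
    Complex.exp ((2 * (n : ℂ) - 1) * π * I * v)

/-- The Jacobi theta function θ₃. -/
def jtheta3 (v τ : ℂ) : ℂ :=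
  ∑' n : ℤ, Complex.exp (π * I * τ * (n : ℂ) ^ 2) * Complex.exp (2 * π * I * (n : ℂ) * v)

/-- Dedekind's eta function. -/
def dedekindEta (τ : ℂ) : ℂ :=
  Complex.exp (π * I * τ / 12) * ∏' n : ℕ, (1 - Complex.exp (2 * π * I * ((n : ℂ) + 1) * τ))

/-- For type A_{N−1}: M_j(z) = e^{2πiJz/L} θ₂(Jτ + Nz/L; Nτ), with τ = iW/L. -/
def MA (N : ℕ) (L W : ℝ) (Jj : ℝ) (z : ℂ) : ℂ :=
  Complex.exp (2 * π * I * Jj * z / L) *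
    jtheta2 ((Jj : ℂ) * (I * W / L) + N * z / L) (N * (I * W / L))

/-- J(j) = j − 1/2 for 1-based j; for the 0-based index j : Fin N this is j + 1/2. -/
def JA {N : ℕ} (j : Fin N) : ℝ := (j : ℕ) + 1 / 2

/-- The general term of `MA`, as a single exponential. -/
def Tt (N : ℕ) (L W J : ℝ) (n : ℤ) (z : ℂ) : ℂ :=
  Complex.exp (↑π * I * (↑N * (I * ↑W / ↑L)) * ((n : ℂ) - 1 / 2) ^ 2 +
    (2 * (n : ℂ) - 1) * ↑π * I * ((J : ℂ) * (I * ↑W / ↑L) + ↑N * z / ↑L) +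
    2 * ↑π * I * ↑J * z / ↑L)

lemma MA_eq (N : ℕ) (L W J : ℝ) (z : ℂ) : MA N L W J z = ∑' n : ℤ, Tt N L W J n z := by
  rw [MA, jtheta2, ← tsum_mul_left]
  refine tsum_congr fun n => ?_
  rw [Tt, ← Complex.exp_add, ← Complex.exp_add]
  congr 1
  ring

lemma Tt_ofReal (N : ℕ) (L W J y : ℝ) (n : ℤ) :
    Tt N L W J n (I * ↑y) =
      ((Real.exp (-(π * N * W / L) * ((n : ℝ) - 1 / 2) ^ 2
        - (2 * (n : ℝ) - 1) * π * (J * W + N * y) / L - 2 * π * J * y / L) : ℝ) : ℂ) := by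
  rw [Tt, Complex.ofReal_exp]
  congr 1
  push_cast
  linear_combination (↑π * (N : ℂ) * ↑W / ↑L * ((n : ℂ) - 1/2)^2
    + (2 * (n : ℂ) - 1) * ↑π * ((J : ℂ) * ↑W + ↑N * ↑y) / ↑L
    + 2 * ↑π * (J : ℂ) * ↑y / ↑L) * Complex.I_sq

lemma norm_Tt (N : ℕ) (L W J : ℝ) (n : ℤ) (x y : ℝ) :
    ‖Tt N L W J n (↑x + I * ↑y)‖ = ‖Tt N L W J n (I * ↑y)‖ := by
  have h : Tt N L W J n (↑x + I * ↑y) = Tt N L W J n (I * ↑y) *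
      Complex.exp ((((2 * (n : ℝ) - 1) * π * N / L + 2 * π * J / L) * x : ℝ) * I) := by
    rw [Tt, Tt, ← Complex.exp_add]
    congr 1
    push_cast
    ring
  rw [h, norm_mul, Complex.norm_exp_ofReal_mul_I, mul_one]

lemma summable_gauss (a : ℝ) (ha : 0 < a) (b c : ℝ) :
    Summable fun n : ℤ => Real.exp (-a * ((n : ℝ) - 1 / 2) ^ 2 + b * (n : ℝ) + c) := by
  have hb := summable_pow_mul_jacobiTheta₂_term_bound (|a + b| / (2 * π)) (T := a / π)
    (by positivity) 0
  refine Summable.of_nonneg_of_le (fun n => (Real.exp_pos _).le) (fun n => ?_)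
    (hb.mul_left (Real.exp (c - a / 4)))
  rw [pow_zero, one_mul, ← Real.exp_add]
  apply Real.exp_le_exp.mpr
  have hπ : (0:ℝ) < π := Real.pi_pos
  have h1 : -π * (a / π * (n:ℝ) ^ 2 - 2 * (|a + b| / (2 * π)) * |(n:ℝ)|)
      = -a * (n:ℝ)^2 + |a + b| * |(n:ℝ)| := by
    field_simp
    ring
  push_cast
  rw [h1]
  have h2 : (a + b) * (n:ℝ) ≤ |a + b| * |(n:ℝ)| := by
    calc (a + b) * (n:ℝ) ≤ |(a + b) * (n:ℝ)| := le_abs_self _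
    _ = |a + b| * |(n:ℝ)| := abs_mul _ _
  nlinarith [sq_nonneg ((n:ℝ) - 1/2)]

lemma summable_norm_Tt (N : ℕ) (L W J y : ℝ) (hL : 0 < L) (hW : 0 < W) (hN : 1 ≤ N) :
    Summable fun n : ℤ => ‖Tt N L W J n (I * ↑y)‖ := by
  have h1 : ∀ n : ℤ, ‖Tt N L W J n (I * ↑y)‖ =
      Real.exp (-(π * N * W / L) * ((n : ℝ) - 1 / 2) ^ 2
        + (-(2 * π * (J * W + N * y) / L)) * (n : ℝ)
        + (π * (J * W + N * y) / L - 2 * π * J * y / L)) := by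
    intro n
    rw [Tt_ofReal, Complex.norm_real, Real.norm_eq_abs, abs_of_pos (Real.exp_pos _)]
    congr 1
    ring
  simp only [h1]
  have hNpos : (0:ℝ) < N := by exact_mod_cast hN
  exact summable_gauss _ (by positivity) _ _

lemma term_eq (N : ℕ) (L W Jj Jk : ℝ) (m n : ℤ) (x y : ℝ) (D : ℤ)
    (hD : (D : ℝ) = N * ((n : ℝ) - m) + (Jk - Jj)) :
    conj (Tt N L W Jj m (↑x + I * ↑y)) * Tt N L W Jk n (↑x + I * ↑y)
      = Tt N L W Jj m (I * ↑y) * Tt N L W Jk n (I * ↑y) *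
        Complex.exp ((2 * ↑π * I * (D : ℂ) / ↑L) * ↑x) := by
  have hD' : (D : ℂ) = N * ((n : ℂ) - m) + ((Jk : ℂ) - Jj) := by
    have := congrArg (Complex.ofReal) hD
    push_cast at this ⊢
    exact_mod_cast this
  rw [Tt, Tt, Tt, Tt, ← Complex.exp_conj, ← Complex.exp_add, ← Complex.exp_add,
    ← Complex.exp_add]
  congr 1
  simp only [map_add, map_mul, map_sub, map_div₀, map_pow, map_one, map_ofNat,
    Complex.conj_I, Complex.conj_ofReal, map_intCast, map_natCast]
  rw [hD']
  ring

lemma integral_exp_int (L : ℝ) (hL : 0 < L) (d : ℤ) :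
    ∫ x in (0:ℝ)..L, Complex.exp ((2 * ↑π * I * (d : ℂ) / ↑L) * ↑x)
      = if d = 0 then (L : ℂ) else 0 := by
  rcases eq_or_ne d 0 with h | h
  · simp [h]
  · rw [if_neg h, integral_exp_mul_complex ?_]
    · have hL' : (L : ℂ) ≠ 0 := by exact_mod_cast hL.ne'
      have h1 : (2 * ↑π * I * (d : ℂ) / ↑L) * (L : ℂ) = (d : ℂ) * (2 * ↑π * I) := by
        rw [div_mul_cancel₀ _ hL']
        ring
      rw [Complex.ofReal_zero, mul_zero, h1, Complex.exp_int_mul_two_pi_mul_I, Complex.exp_zero,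
        sub_self, zero_div]
    · apply div_ne_zero
      · apply mul_ne_zero (mul_ne_zero (mul_ne_zero two_ne_zero ?_) I_ne_zero) ?_
        · exact_mod_cast Real.pi_ne_zero
        · exact_mod_cast h
      · exact_mod_cast hL.ne'


lemma tsum_diag {f : ℤ → ℂ} (hf : Summable fun p : ℤ × ℤ => (if p.2 = p.1 then f p.1 else 0)) :
    ∑' p : ℤ × ℤ, (if p.2 = p.1 then f p.1 else 0) = ∑' m : ℤ, f m := by
  rw [Summable.tsum_prod' hf fun m => (hasSum_ite_eq m (f m)).summable]
  exact tsum_congr fun m => (hasSum_ite_eq m (f m)).tsum_eq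

lemma diag_sum (N : ℕ) (L W J y : ℝ) :
    ∑' m : ℤ, Tt N L W J m (I * ↑y) * Tt N L W J m (I * ↑y) * (L : ℂ)
      = (L : ℂ) * Complex.exp (-(4 * π * J * y / L)) *
        jtheta2 (2 * ((J : ℂ) * (I * W / L) + I * N * y / L)) (2 * N * (I * W / L)) := by
  rw [jtheta2, ← tsum_mul_left]
  refine tsum_congr fun m => ?_
  have hsq : Tt N L W J m (I * ↑y) * Tt N L W J m (I * ↑y)
      = Complex.exp (-(4 * ↑π * ↑J * ↑y / ↑L)) *
        (Complex.exp (↑π * I * (2 * ↑N * (I * ↑W / ↑L)) * ((m : ℂ) - 1 / 2) ^ 2) *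
         Complex.exp ((2 * (m : ℂ) - 1) * ↑π * I *
           (2 * ((J : ℂ) * (I * ↑W / ↑L) + I * ↑N * ↑y / ↑L)))) := by
    rw [Tt, ← Complex.exp_add, ← Complex.exp_add, ← Complex.exp_add]
    congr 1
    linear_combination (4 * (π:ℂ) * (J : ℂ) * (y:ℂ) / (L:ℂ)) * Complex.I_sq
  rw [hsq]
  ring

set_option maxHeartbeats 1000000 in
theorem statement2 (N : ℕ) (hN : 1 ≤ N) (L W : ℝ) (hL : 0 < L) (hW : 0 < W)
    (j k : Fin N) (y : ℝ) :
    (∫ x in (0:ℝ)..L, conj (MA N L W (JA j) (x + I * y)) * MA N L W (JA k) (x + I * y))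
      = if j = k then
          (L : ℂ) * Complex.exp (-(4 * π * JA j * y / L)) *
            jtheta2 (2 * ((JA j : ℂ) * (I * W / L) + I * N * y / L)) (2 * N * (I * W / L))
        else 0 := by
  have hsum : ∀ J : ℝ, Summable fun n : ℤ => ‖Tt N L W J n (I * ↑y)‖ :=
    fun J => summable_norm_Tt N L W J y hL hW hN
  set D : ℤ × ℤ → ℤ := fun p => N * (p.2 - p.1) + ((k : ℤ) - (j : ℤ)) with hDdef
  set C : ℤ × ℤ → ℂ := fun p => Tt N L W (JA j) p.1 (I * ↑y) * Tt N L W (JA k) p.2 (I * ↑y)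
    with hCdef
  have hD : ∀ p : ℤ × ℤ, ((D p : ℤ) : ℝ) = N * ((p.2 : ℝ) - p.1) + (JA k - JA j) := by
    intro p
    simp only [hDdef, JA]
    push_cast
    ring
  -- rewrite integrand as a double sum
  have hMA : ∀ x : ℝ, conj (MA N L W (JA j) (↑x + I * ↑y)) * MA N L W (JA k) (↑x + I * ↑y)
      = ∑' p : ℤ × ℤ, C p * Complex.exp ((2 * ↑π * I * (D p : ℂ) / ↑L) * ↑x) := by
    intro x
    rw [MA_eq, MA_eq, conj_tsum]
    rw [tsum_mul_tsum_of_summable_norm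
      (by simpa only [RCLike.norm_conj, norm_Tt] using hsum (JA j))
      (by simpa only [norm_Tt] using hsum (JA k))]
    exact tsum_congr fun p => term_eq N L W (JA j) (JA k) p.1 p.2 x y (D p) (hD p)
  rw [intervalIntegral.integral_of_le hL.le]
  simp only [hMA]
  rw [← MeasureTheory.integral_tsum_of_summable_integral_norm ?hint ?hnorm]
  case hint =>
    intro p
    apply Continuous.integrableOn_Ioc
    fun_prop
  case hnorm =>
    have heq : ∀ p : ℤ × ℤ,
        (∫ x in Set.Ioc (0:ℝ) L, ‖C p * Complex.exp ((2 * ↑π * I * (D p : ℂ) / ↑L) * ↑x)‖)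
          = L * ‖C p‖ := by
      intro p
      have h2 : ∀ x : ℝ, ‖C p * Complex.exp ((2 * ↑π * I * (D p : ℂ) / ↑L) * ↑x)‖ = ‖C p‖ := by
        intro x
        rw [norm_mul]
        have h3 : (2 * ↑π * I * (D p : ℂ) / ↑L) * (x : ℂ) = ((2 * π * (D p) * x / L : ℝ) : ℂ) * I := by
          push_cast
          ring
        have h4 : ‖Complex.exp (((2 * π * (D p) * x / L : ℝ) : ℂ) * I)‖ = 1 := by
          rw [Complex.norm_exp_ofReal_mul_I]
        rw [h3, h4, mul_one]
      simp only [h2]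
      rw [MeasureTheory.setIntegral_const, MeasureTheory.measureReal_def, Real.volume_Ioc, sub_zero,
        ENNReal.toReal_ofReal hL.le, smul_eq_mul]
    simp only [heq]
    simp only [hCdef, norm_mul]
    exact (((hsum (JA j)).mul_of_nonneg (hsum (JA k))
      (fun _ => norm_nonneg _) (fun _ => norm_nonneg _)).mul_left L)
  have hintval : ∀ p : ℤ × ℤ,
      (∫ x in Set.Ioc (0:ℝ) L, C p * Complex.exp ((2 * ↑π * I * (D p : ℂ) / ↑L) * ↑x))
        = C p * (if D p = 0 then (L : ℂ) else 0) := by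
    intro p
    rw [MeasureTheory.integral_const_mul, ← intervalIntegral.integral_of_le hL.le,
      integral_exp_int L hL (D p)]
  simp only [hintval]
  by_cases hjk : j = k
  · subst hjk
    rw [if_pos rfl]
    have hD0 : ∀ p : ℤ × ℤ, D p = 0 ↔ p.2 = p.1 := by
      intro p
      simp only [hDdef, sub_self, add_zero]
      constructor
      · intro h
        rcases mul_eq_zero.mp h with h' | h'
        · exact absurd (by exact_mod_cast h' : N = 0) (by omega)
        · omega
      · intro h
        rw [h, sub_self, mul_zero]
    have hB : Summable fun p : ℤ × ℤ =>
        (if p.2 = p.1 then Tt N L W (JA j) p.1 (I * ↑y) * Tt N L W (JA j) p.1 (I * ↑y) * L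
          else (0:ℂ)) := by
      apply Summable.of_norm_bounded
        (g := fun p : ℤ × ℤ => ‖Tt N L W (JA j) p.1 (I * ↑y)‖ * ‖Tt N L W (JA j) p.2 (I * ↑y)‖ * L)
        (((hsum (JA j)).mul_of_nonneg (hsum (JA j))
          (fun _ => norm_nonneg _) (fun _ => norm_nonneg _)).mul_right L)
      intro p
      rcases eq_or_ne p.2 p.1 with h | h
      · rw [if_pos h, h, norm_mul, norm_mul, Complex.norm_real, Real.norm_eq_abs,
          abs_of_pos hL]
      · rw [if_neg h, norm_zero]
        positivity
    calc (∑' p : ℤ × ℤ, C p * (if D p = 0 then (L : ℂ) else 0))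
        = ∑' p : ℤ × ℤ, (if p.2 = p.1
            then Tt N L W (JA j) p.1 (I * ↑y) * Tt N L W (JA j) p.1 (I * ↑y) * L else 0) := by
          refine tsum_congr fun p => ?_
          rcases eq_or_ne p.2 p.1 with h | h
          · rw [if_pos ((hD0 p).mpr h), if_pos h, hCdef]
            simp only [h]
          · rw [if_neg (fun hh => h ((hD0 p).mp hh)), if_neg h, mul_zero]
      _ = ∑' m : ℤ, Tt N L W (JA j) m (I * ↑y) * Tt N L W (JA j) m (I * ↑y) * (L:ℂ) :=
          tsum_diag (f := fun m : ℤ => Tt N L W (JA j) m (I * ↑y) * Tt N L W (JA j) m (I * ↑y) * (L:ℂ)) hB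
      _ = (L : ℂ) * Complex.exp (-(4 * π * JA j * y / L)) *
            jtheta2 (2 * ((JA j : ℂ) * (I * W / L) + I * N * y / L)) (2 * N * (I * W / L)) :=
          diag_sum N L W (JA j) y
  · rw [if_neg hjk]
    have hDne : ∀ p : ℤ × ℤ, D p ≠ 0 := by
      intro p hp
      simp only [hDdef] at hp
      have hk : ((k : ℕ) : ℤ) < N := by exact_mod_cast k.isLt
      have hj : ((j : ℕ) : ℤ) < N := by exact_mod_cast j.isLt
      have hk0 : (0:ℤ) ≤ ((k : ℕ) : ℤ) := Int.natCast_nonneg _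
      have hj0 : (0:ℤ) ≤ ((j : ℕ) : ℤ) := Int.natCast_nonneg _
      have hne : ((k : ℕ) : ℤ) ≠ ((j : ℕ) : ℤ) := by
        intro h
        exact hjk (Fin.ext (by exact_mod_cast h.symm))
      have ht : (k : ℤ) - (j : ℤ) = (N : ℤ) * (p.1 - p.2) := by linear_combination hp
      rcases eq_or_ne (p.1 - p.2) 0 with h0 | h0
      · rw [h0, mul_zero] at ht
        omega
      · have h1 : (1:ℤ) ≤ |p.1 - p.2| := Int.one_le_abs h0
        have h3 : (N:ℤ) ≤ |(k : ℤ) - (j : ℤ)| := by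
          rw [ht, abs_mul, abs_of_nonneg (by positivity : (0:ℤ) ≤ (N:ℤ))]
          nlinarith
        have h2 : |(k : ℤ) - (j : ℤ)| < N := abs_lt.mpr ⟨by omega, by omega⟩
        exact absurd h2 (not_lt.mpr h3)
    calc (∑' p : ℤ × ℤ, C p * (if D p = 0 then (L : ℂ) else 0))
        = ∑' _ : ℤ × ℤ, (0:ℂ) := tsum_congr fun p => by rw [if_neg (hDne p), mul_zero]
      _ = 0 := tsum_zero
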